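/- (Algebraic form of Proposition 5.2.) Let v ∈ Δ_{p+1,q+1} \ {0} and let Q̂ := {x = (x₁,x₂) ∈ ℝ^{p+1}×ℝ^{q+1} : |x₁| = |x₂| = 1} (Euclidean norms). Suppose x ∈ Q̂ satisfies x·v = 0. Then {y ∈ Q̂ : y·v = 0} = {x, −x} ∪ {cos(t)·x + sin(t)·d : t ∈ ℝ, d = (d₁,d₂) ∈ ℝ^{p+1}×ℝ^{q+1}, ⟨d₁,x₁⟩_eucl = ⟨d₂,x₂⟩_eucl = 0, |d₁| = |d₂| = 1, d·v = 0}. -/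

import Mathlib

open Complex Matrix

namespace Paper

noncomputable section

/-- The 2×2 generator matrices of Remark 2.1. -/
def matE : Matrix (Fin 2) (Fin 2) ℂ := 1
def matT : Matrix (Fin 2) (Fin 2) ℂ := !![-1, 0; 0, 1]
def matG1 : Matrix (Fin 2) (Fin 2) ℂ := !![0, Complex.I; Complex.I, 0]
def matG2 : Matrix (Fin 2) (Fin 2) ℂ := !![0, -1; 1, 0]

/-- Iterated Kronecker product of 2×2 matrices, realised on the index type `Fin m → Fin 2`
(the slot `ν` corresponds to the `(ν+1)`-st label of the basis spinors `u(ε₁,…,ε_m)`,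
i.e. the Kronecker factors are taken from right to left). -/
def tprod {m : ℕ} (M : Fin m → Matrix (Fin 2) (Fin 2) ℂ) :
    Matrix (Fin m → Fin 2) (Fin m → Fin 2) ℂ :=
  Matrix.of fun a b => ∏ ν, M ν (a ν) (b ν)

/-- `τ_j = 1` if `ε_j = 1` and `τ_j = i` if `ε_j = -1`. -/
def tau {n : ℕ} (ε : Fin n → ℝ) (j : Fin n) : ℂ := if ε j = 1 then 1 else Complex.I

/-- The matrices `Φ_{p,q}(e_i)` of the explicit Clifford representation of Remark 2.1
(0-based index `i`; the paper's `e_{2j-1}` resp. `e_{2j}` correspond to `i = 2j-2` resp.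
`i = 2j-1`, acting by `g₁` resp. `g₂` in slot `j-1`, by `T` in the lower slots and by `E`
in the higher slots).  For odd `n` the last matrix is the first component
`pr₁ ∘ Φ̃ (e_n) = τ_n · (i T ⊗ ⋯ ⊗ T)`. -/
def Phi {n : ℕ} (ε : Fin n → ℝ) (i : Fin n) :
    Matrix (Fin (n / 2) → Fin 2) (Fin (n / 2) → Fin 2) ℂ :=
  tau ε i •
    if i.val < 2 * (n / 2) then
      tprod fun ν : Fin (n / 2) =>
        if ν.val < i.val / 2 then matT
        else if ν.val = i.val / 2 then (if i.val % 2 = 0 then matG1 else matG2)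
        else matE
    else Complex.I • tprod fun _ : Fin (n / 2) => matT

/-- The spinor module `Δ_{p,q} = ℂ^{2^{⌊n/2⌋}}`. -/
abbrev Spinor (n : ℕ) := (Fin (n / 2) → Fin 2) → ℂ

/-- Clifford multiplication by a real vector, as a matrix. -/
def cliffR {n : ℕ} (ε : Fin n → ℝ) (x : Fin n → ℝ) :
    Matrix (Fin (n / 2) → Fin 2) (Fin (n / 2) → Fin 2) ℂ :=
  ∑ i, (x i : ℂ) • Phi ε i

/-- Clifford multiplication by a complex vector (complex-bilinear extension). -/
def cliffC {n : ℕ} (ε : Fin n → ℝ) (x : Fin n → ℂ) :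
    Matrix (Fin (n / 2) → Fin 2) (Fin (n / 2) → Fin 2) ℂ :=
  ∑ i, x i • Phi ε i

/-- The scalar product `⟨x,y⟩_{p,q} = ∑ ε_i x_i y_i` on `ℝⁿ`. -/
def ipR {n : ℕ} (ε : Fin n → ℝ) (x y : Fin n → ℝ) : ℝ := ∑ i, ε i * x i * y i

/-- Its complex-bilinear extension to `ℂⁿ`. -/
def ipC {n : ℕ} (ε : Fin n → ℝ) (x y : Fin n → ℂ) : ℂ := ∑ i, (ε i : ℂ) * x i * y i

/-- The standard Hermitian scalar product on the spinor module. -/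
def stdInner {n : ℕ} (u v : Spinor n) : ℂ := ∑ b, (starRingEnd ℂ) (u b) * v b

/-- Clifford multiplication by the product `e_{i₁} ⋯ e_{i_k}` over a set of indices
`s = {i₁ < … < i_k}`, taken in increasing order. -/
def cliffSet {n : ℕ} (ε : Fin n → ℝ) (s : Finset (Fin n)) :
    Matrix (Fin (n / 2) → Fin 2) (Fin (n / 2) → Fin 2) ℂ :=
  ((s.sort (· ≤ ·)).map (Phi ε)).prod

/-- The set of indices with `ε_i = -1`. -/
def negSet {n : ℕ} (ε : Fin n → ℝ) : Finset (Fin n) := Finset.univ.filter fun i => ε i = -1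

/-- The indefinite spinor inner product `⟨u,v⟩_Δ = d · (e_{i₁} ⋯ e_{i_p} · u, v)`,
where `i₁ < … < i_p` are the indices with `ε = -1`. -/
def sform {n : ℕ} (ε : Fin n → ℝ) (d : ℂ) (u v : Spinor n) : ℂ :=
  d * stdInner ((cliffSet ε (negSet ε)).mulVec u) v

/-- The coefficient `d_{k,p} · ε_{i₁} ⋯ ε_{i_k} · ⟨e_{i₁} ⋯ e_{i_k} · χ, χ⟩_Δ` of the
algebraic Dirac form (`dD` is the constant of the spinor inner product, `dk` is `d_{k,p}`). -/
def dCoeff {n : ℕ} (ε : Fin n → ℝ) (dD dk : ℂ) (s : Finset (Fin n)) (χ : Spinor n) : ℂ :=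
  dk * (∏ i ∈ s, (ε i : ℂ)) * sform ε dD ((cliffSet ε s).mulVec χ) χ

/-- The covector `X^♭ = ⟨X,·⟩_{p,q}`. -/
def flat {n : ℕ} (ε : Fin n → ℝ) (X : Fin n → ℝ) : (Fin n → ℝ) →ₗ[ℝ] ℝ :=
  ∑ i, (ε i * X i) • LinearMap.proj i

/-- The wedge product of `k` one-forms, as an alternating `k`-form. -/
def wedge1 {n k : ℕ} (f : Fin k → ((Fin n → ℝ) →ₗ[ℝ] ℝ)) :
    AlternatingMap ℝ (Fin n → ℝ) ℝ (Fin k) :=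
  (Matrix.detRowAlternating : AlternatingMap ℝ (Fin k → ℝ) ℝ (Fin k)).compLinearMap
    (LinearMap.pi f)

/-- The algebraic Dirac `k`-form
`α^k_χ = d_{k,p} ∑_{i₁<⋯<i_k} ε_{i₁}⋯ε_{i_k} ⟨e_{i₁}⋯e_{i_k}·χ, χ⟩_Δ e^♭_{i₁} ∧ ⋯ ∧ e^♭_{i_k}`
(a real form; the coefficients are real by the choice of the constant `dk = d_{k,p}`). -/
def diracForm {n : ℕ} (ε : Fin n → ℝ) (dD dk : ℂ) (k : ℕ) (χ : Spinor n) :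
    AlternatingMap ℝ (Fin n → ℝ) ℝ (Fin k) :=
  ∑ s : Finset (Fin n),
    if h : s.card = k then
      (dCoeff ε dD dk s χ).re •
        wedge1 fun j => flat ε (Pi.single (s.orderEmbOfFin h j) 1)
    else 0

/-- The wedge product of `j` one-forms with a `(p-j)`-form, as an alternating `p`-form. -/
def wedgeMix {n p j : ℕ} (h : j ≤ p) (f : Fin j → ((Fin n → ℝ) →ₗ[ℝ] ℝ))
    (β : AlternatingMap ℝ (Fin n → ℝ) ℝ (Fin (p - j))) :
    AlternatingMap ℝ (Fin n → ℝ) ℝ (Fin p) :=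
  AlternatingMap.domDomCongr (finSumFinEquiv.trans (finCongr (by omega)))
    ((TensorProduct.lid ℝ ℝ).toLinearMap.compAlternatingMap ((wedge1 f).domCoprod β))

/-- The basis spinor `u(ε₁,…,ε_m)` (encoded by `a : Fin m → Fin 2`, where `a ν = 0`
corresponds to the label `ε_{ν+1} = 1` and `a ν = 1` to `ε_{ν+1} = -1`). -/
def uB (n : ℕ) (a : Fin (n / 2) → Fin 2) : Spinor n := fun b => if b = a then 1 else 0

end

end Paper

namespace Paper
noncomputable section

lemma matT_sq : matT * matT = 1 := by
  ext i j; fin_cases i <;> fin_cases j <;> simp [matT, Matrix.mul_apply, Fin.sum_univ_two]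
lemma matG1_sq : matG1 * matG1 = (-1 : ℂ) • 1 := by
  ext i j; fin_cases i <;> fin_cases j <;>
    simp [matG1, Matrix.mul_apply, Fin.sum_univ_two, Complex.I_mul_I]
lemma matG2_sq : matG2 * matG2 = (-1 : ℂ) • 1 := by
  ext i j; fin_cases i <;> fin_cases j <;> simp [matG2, Matrix.mul_apply, Fin.sum_univ_two]
lemma g1g2 : matG1 * matG2 = (-1 : ℂ) • (matG2 * matG1) := by
  ext i j; fin_cases i <;> fin_cases j <;>
    simp [matG1, matG2, Matrix.mul_apply, Fin.sum_univ_two]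
lemma g1T : matG1 * matT = (-1 : ℂ) • (matT * matG1) := by
  ext i j; fin_cases i <;> fin_cases j <;>
    simp [matG1, matT, Matrix.mul_apply, Fin.sum_univ_two]
lemma g2T : matG2 * matT = (-1 : ℂ) • (matT * matG2) := by
  ext i j; fin_cases i <;> fin_cases j <;>
    simp [matG2, matT, Matrix.mul_apply, Fin.sum_univ_two]

lemma tprod_mul {m : ℕ} (M N : Fin m → Matrix (Fin 2) (Fin 2) ℂ) :
    tprod M * tprod N = tprod (fun ν => M ν * N ν) := by
  ext a b
  simp only [tprod, Matrix.mul_apply, Matrix.of_apply]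
  rw [Finset.prod_univ_sum, Fintype.piFinset_univ]
  exact Finset.sum_congr rfl fun c _ => Finset.prod_mul_distrib.symm

lemma tprod_smul {m : ℕ} (s : Fin m → ℂ) (M : Fin m → Matrix (Fin 2) (Fin 2) ℂ) :
    tprod (fun ν => s ν • M ν) = (∏ ν, s ν) • tprod M := by
  ext a b
  simp [tprod, Finset.prod_mul_distrib]

lemma tprod_one {m : ℕ} : tprod (fun _ : Fin m => (1 : Matrix (Fin 2) (Fin 2) ℂ)) = 1 := by
  ext a b
  simp only [tprod, Matrix.of_apply, Matrix.one_apply]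
  rw [Finset.prod_boole]
  simp [funext_iff]

lemma tprod_anticomm {m : ℕ} (M N : Fin m → Matrix (Fin 2) (Fin 2) ℂ) (s : Fin m → ℂ)
    (h : ∀ ν, M ν * N ν = s ν • (N ν * M ν)) :
    tprod M * tprod N = (∏ ν, s ν) • (tprod N * tprod M) := by
  rw [tprod_mul, tprod_mul, ← tprod_smul]
  exact congrArg tprod (funext h)

lemma prod_sign {m : ℕ} (k : ℕ) (hk : k < m) :
    ∏ ν : Fin m, (if ν.val = k then (-1 : ℂ) else 1) = -1 := by
  have h : ∀ ν : Fin m, (if ν.val = k then (-1 : ℂ) else 1)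
      = (if ν = ⟨k, hk⟩ then (-1 : ℂ) else 1) := by
    intro ν; congr 1; simp [Fin.ext_iff]
  simp only [h]
  rw [Finset.prod_ite_eq' Finset.univ (⟨k, hk⟩ : Fin m) (fun _ => (-1 : ℂ))]
  simp

/-- The factor functions of `Phi`. -/
def Ffac (n : ℕ) (i : Fin n) : Fin (n / 2) → Matrix (Fin 2) (Fin 2) ℂ :=
  if i.val < 2 * (n / 2) then
    (fun ν => if ν.val < i.val / 2 then matT
      else if ν.val = i.val / 2 then (if i.val % 2 = 0 then matG1 else matG2) else matE)
  else fun _ => matT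

/-- The scalar in front. -/
def sc {n : ℕ} (ε : Fin n → ℝ) (i : Fin n) : ℂ :=
  tau ε i * (if i.val < 2 * (n / 2) then 1 else Complex.I)

lemma Phi_eq {n : ℕ} (ε : Fin n → ℝ) (i : Fin n) :
    Phi ε i = sc ε i • tprod (Ffac n i) := by
  unfold Phi sc Ffac
  split
  · simp
  · simp [smul_smul]

lemma tprodF_sq_inner {n : ℕ} (i : Fin n) (h : i.val < 2 * (n / 2)) :
    tprod (Ffac n i) * tprod (Ffac n i) = (-1 : ℂ) • 1 := by
  rw [tprod_mul]
  have hF : (fun ν => Ffac n i ν * Ffac n i ν)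
      = fun ν : Fin (n / 2) =>
        (if ν.val = i.val / 2 then (-1 : ℂ) else 1) • (1 : Matrix (Fin 2) (Fin 2) ℂ) := by
    funext ν
    unfold Ffac
    rw [if_pos h]
    by_cases h1 : ν.val < i.val / 2
    · simp [h1, matT_sq, show ν.val ≠ i.val / 2 by omega]
    · by_cases h2 : ν.val = i.val / 2
      · by_cases h3 : i.val % 2 = 0 <;> simp [h1, h2, h3, matG1_sq, matG2_sq]
      · simp [h1, h2, matE]
  rw [hF, tprod_smul, tprod_one, prod_sign (i.val / 2) (by omega)]

lemma Phi_sq {n : ℕ} (ε : Fin n → ℝ) (i : Fin n) (hε : ε i = 1 ∨ ε i = -1) :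
    Phi ε i * Phi ε i = (-(ε i) : ℂ) • 1 := by
  have htau : tau ε i * tau ε i * (-1 : ℂ) = -((ε i : ℝ) : ℂ) := by
    unfold tau
    rcases hε with h | h <;> rw [h] <;> norm_num [Complex.I_mul_I]
  rw [Phi_eq, smul_mul_assoc, mul_smul_comm, smul_smul]
  by_cases h : i.val < 2 * (n / 2)
  · rw [tprodF_sq_inner i h, smul_smul]
    have : sc ε i * sc ε i * (-1 : ℂ) = -((ε i : ℝ) : ℂ) := by
      unfold sc; rw [if_pos h, mul_one]; exact htau
    rw [this]
  · have hFf : Ffac n i = fun _ => matT := if_neg h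
    rw [hFf, tprod_mul]
    have : (fun ν : Fin (n / 2) => matT * matT) = fun _ : Fin (n / 2) => (1 : Matrix (Fin 2) (Fin 2) ℂ) := by
      funext ν; exact matT_sq
    rw [this, tprod_one]
    have : sc ε i * sc ε i = tau ε i * tau ε i * (-1 : ℂ) := by
      unfold sc; rw [if_neg h]; ring_nf; try rw [Complex.I_sq]; try ring
    rw [this, htau]

lemma tprodF_anticomm {n : ℕ} (i j : Fin n) (hij : i.val < j.val) :
    tprod (Ffac n i) * tprod (Ffac n j)
      = (-1 : ℂ) • (tprod (Ffac n j) * tprod (Ffac n i)) := by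
  have hjn := j.isLt
  have hn := Nat.div_add_mod n 2
  have hi : i.val < 2 * (n / 2) := by omega
  rw [tprod_anticomm _ _ (fun ν => if ν.val = i.val / 2 then (-1 : ℂ) else 1) ?_,
    prod_sign (i.val / 2) (by omega)]
  intro ν
  unfold Ffac
  rw [if_pos hi]
  by_cases hj : j.val < 2 * (n / 2)
  · rw [if_pos hj]
    have hdiv : i.val / 2 ≤ j.val / 2 := Nat.div_le_div_right (le_of_lt hij)
    by_cases h1 : ν.val < i.val / 2
    · have hlt : ν.val < j.val / 2 := lt_of_lt_of_le h1 hdiv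
      simp [h1, hlt, show ν.val ≠ i.val / 2 by omega]
    · by_cases h2 : ν.val = i.val / 2
      · by_cases h3 : i.val / 2 < j.val / 2
        · have hlt : ν.val < j.val / 2 := by omega
          by_cases h4 : i.val % 2 = 0 <;> simp [h1, h2, h3, h4, hlt, g1T, g2T]
        · have he : i.val % 2 = 0 ∧ j.val % 2 = 1 ∧ j.val / 2 = i.val / 2 := by omega
          simp [h1, h2, he.1, he.2.1, he.2.2, g1g2]
      · simp only [if_neg h1, if_neg h2, one_smul]
        by_cases h4 : ν.val < j.val / 2 <;> by_cases h5 : ν.val = j.val / 2 <;>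
          simp [h4, h5, matE]
  · rw [if_neg hj]
    by_cases h1 : ν.val < i.val / 2
    · simp [h1, show ν.val ≠ i.val / 2 by omega]
    · by_cases h2 : ν.val = i.val / 2
      · by_cases h4 : i.val % 2 = 0 <;> simp [h1, h2, h4, g1T, g2T]
      · simp [h1, h2, matE]

lemma Phi_anticomm {n : ℕ} (ε : Fin n → ℝ) (i j : Fin n) (hij : i ≠ j) :
    Phi ε i * Phi ε j = -(Phi ε j * Phi ε i) := by
  rw [Phi_eq ε i, Phi_eq ε j, smul_mul_assoc, mul_smul_comm, smul_mul_assoc, mul_smul_comm,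
    smul_smul, smul_smul]
  have hv : i.val ≠ j.val := fun h => hij (Fin.ext h)
  rcases hv.lt_or_gt with h | h
  · rw [tprodF_anticomm i j h, smul_smul,
      show sc ε i * sc ε j * (-1 : ℂ) = -(sc ε j * sc ε i) by ring, neg_smul]
  · rw [tprodF_anticomm j i h, smul_smul,
      show sc ε j * sc ε i * (-1 : ℂ) = -(sc ε i * sc ε j) by ring, neg_smul, neg_neg]

end
end Paper

namespace Paper
noncomputable section

lemma Phi_rel {n : ℕ} (ε : Fin n → ℝ) (hε : ∀ i, ε i = 1 ∨ ε i = -1) (i j : Fin n) :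
    Phi ε i * Phi ε j + Phi ε j * Phi ε i
      = (if i = j then ((-2 * ε i : ℝ) : ℂ) else 0) • 1 := by
  by_cases h : i = j
  · subst h
    rw [Phi_sq ε i (hε i), if_pos rfl, ← add_smul]
    congr 1
    push_cast; ring
  · rw [Phi_anticomm ε i j h, if_neg h, neg_add_cancel, zero_smul]

lemma cliffR_rel {n : ℕ} (ε : Fin n → ℝ) (hε : ∀ i, ε i = 1 ∨ ε i = -1) (x y : Fin n → ℝ) :
    cliffR ε x * cliffR ε y + cliffR ε y * cliffR ε x
      = ((-2 * ipR ε x y : ℝ) : ℂ) • 1 := by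
  unfold cliffR
  rw [Finset.sum_mul_sum, Finset.sum_mul_sum]
  have swap : (∑ i : Fin n, ∑ j : Fin n, ((y i : ℂ) • Phi ε i) * ((x j : ℂ) • Phi ε j))
      = ∑ i : Fin n, ∑ j : Fin n, ((y j : ℂ) • Phi ε j) * ((x i : ℂ) • Phi ε i) :=
    Finset.sum_comm
  rw [swap, ← Finset.sum_add_distrib]
  simp_rw [← Finset.sum_add_distrib]
  have inner : ∀ i j : Fin n,
      ((x i : ℂ) • Phi ε i) * ((y j : ℂ) • Phi ε j)
        + ((y j : ℂ) • Phi ε j) * ((x i : ℂ) • Phi ε i)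
      = ((x i * y j : ℝ) : ℂ) • (if i = j then ((-2 * ε i : ℝ) : ℂ) else 0) • 1 := by
    intro i j
    rw [smul_mul_assoc, mul_smul_comm, smul_mul_assoc, mul_smul_comm, smul_smul, smul_smul,
      mul_comm ((y j : ℂ)) ((x i : ℂ)), ← smul_add, Phi_rel ε hε i j]
    norm_cast
  simp_rw [inner]
  have collapse : ∀ i : Fin n,
      (∑ j : Fin n, ((x i * y j : ℝ) : ℂ) • (if i = j then ((-2 * ε i : ℝ) : ℂ) else 0) •
          (1 : Matrix (Fin (n / 2) → Fin 2) (Fin (n / 2) → Fin 2) ℂ))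
      = ((x i * y i * (-2 * ε i) : ℝ) : ℂ) •
          (1 : Matrix (Fin (n / 2) → Fin 2) (Fin (n / 2) → Fin 2) ℂ) := by
    intro i
    rw [Finset.sum_eq_single i]
    · rw [if_pos rfl, smul_smul]
      congr 1
      push_cast; ring
    · intro b _ hb
      rw [if_neg (fun h => hb h.symm), zero_smul, smul_zero]
    · intro h; exact absurd (Finset.mem_univ i) h
  simp_rw [collapse]
  rw [← Finset.sum_smul]
  congr 1
  unfold ipR
  push_cast
  rw [Finset.mul_sum]
  exact Finset.sum_congr rfl fun i _ => by ring

lemma ip_eq_zero {n : ℕ} (ε : Fin n → ℝ) (hε : ∀ i, ε i = 1 ∨ ε i = -1)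
    (v : Spinor n) (hv : v ≠ 0) (x y : Fin n → ℝ)
    (hx : (cliffR ε x).mulVec v = 0) (hy : (cliffR ε y).mulVec v = 0) :
    ipR ε x y = 0 := by
  have h := congrArg (fun M : Matrix (Fin (n / 2) → Fin 2) (Fin (n / 2) → Fin 2) ℂ =>
    M.mulVec v) (cliffR_rel ε hε x y)
  simp only [Matrix.add_mulVec, ← Matrix.mulVec_mulVec, hx, hy, Matrix.mulVec_zero,
    add_zero, Matrix.smul_mulVec, Matrix.one_mulVec] at h
  have h0 : ((-2 * ipR ε x y : ℝ) : ℂ) = 0 ∨ v = 0 := smul_eq_zero.mp h.symm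
  rcases h0 with h0 | h0
  · have : (-2 : ℝ) * ipR ε x y = 0 := by exact_mod_cast h0
    linarith
  · exact absurd h0 hv

lemma cliffR_combo {n : ℕ} (ε : Fin n → ℝ) (a b : ℝ) (x y : Fin n → ℝ) :
    cliffR ε (fun i => a * x i + b * y i)
      = ((a : ℂ) • cliffR ε x + (b : ℂ) • cliffR ε y) := by
  unfold cliffR
  rw [Finset.smul_sum, Finset.smul_sum, ← Finset.sum_add_distrib]
  refine Finset.sum_congr rfl fun i _ => ?_
  rw [smul_smul, smul_smul, ← add_smul]
  congr 1
  push_cast; ring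

lemma sum_sq_expand {ι : Type*} (s : Finset ι) (a b : ℝ) (u w : ι → ℝ) :
    ∑ i ∈ s, (a * u i + b * w i) ^ 2
      = a ^ 2 * (∑ i ∈ s, u i ^ 2) + 2 * a * b * (∑ i ∈ s, w i * u i)
        + b ^ 2 * (∑ i ∈ s, w i ^ 2) := by
  rw [Finset.mul_sum, Finset.mul_sum, Finset.mul_sum, ← Finset.sum_add_distrib,
    ← Finset.sum_add_distrib]
  exact Finset.sum_congr rfl fun i _ => by ring

end
end Paper


namespace Paper

/-- algebraic form of Proposition 5.2.  Here `ℝ^{p+1,q+1}` is realised as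
`ℝ^{p+1} × ℝ^{q+1} = ℝ^{p+q+2}` with the first `p+1` coordinates timelike, the block
components `x₁, x₂` of a vector `x` being its restrictions to the index ranges
`i < p+1` resp. `i ≥ p+1`; Euclidean inner products of blocks are written as sums over
the corresponding index ranges. -/
theorem zero_set_on_model
    (p q : ℕ)
    (ε : Fin (p + q + 2) → ℝ)
    (hεdef : ∀ i : Fin (p + q + 2), ε i = if i.val < p + 1 then -1 else 1)
    (v : Spinor (p + q + 2)) (hv : v ≠ 0)
    (x : Fin (p + q + 2) → ℝ)
    -- `x ∈ Q̂`, i.e. `|x₁| = |x₂| = 1`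
    (hx1 : ∑ i ∈ Finset.univ.filter (fun i : Fin (p + q + 2) => i.val < p + 1),
      x i ^ 2 = 1)
    (hx2 : ∑ i ∈ Finset.univ.filter (fun i : Fin (p + q + 2) => ¬ i.val < p + 1),
      x i ^ 2 = 1)
    -- `x · v = 0`
    (hxv : (cliffR ε x).mulVec v = 0) :
    ∀ y : Fin (p + q + 2) → ℝ,
      ((∑ i ∈ Finset.univ.filter (fun i : Fin (p + q + 2) => i.val < p + 1), y i ^ 2 = 1) ∧
       (∑ i ∈ Finset.univ.filter (fun i : Fin (p + q + 2) => ¬ i.val < p + 1), y i ^ 2 = 1) ∧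
       (cliffR ε y).mulVec v = 0)
      ↔ (y = x ∨ y = -x ∨
          ∃ (t : ℝ) (d : Fin (p + q + 2) → ℝ),
            -- `⟨d₁, x₁⟩ = 0` and `⟨d₂, x₂⟩ = 0` (Euclidean)
            (∑ i ∈ Finset.univ.filter (fun i : Fin (p + q + 2) => i.val < p + 1),
              d i * x i = 0) ∧
            (∑ i ∈ Finset.univ.filter (fun i : Fin (p + q + 2) => ¬ i.val < p + 1),
              d i * x i = 0) ∧
            -- `|d₁| = |d₂| = 1`
            (∑ i ∈ Finset.univ.filter (fun i : Fin (p + q + 2) => i.val < p + 1),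
              d i ^ 2 = 1) ∧
            (∑ i ∈ Finset.univ.filter (fun i : Fin (p + q + 2) => ¬ i.val < p + 1),
              d i ^ 2 = 1) ∧
            -- `d · v = 0`
            (cliffR ε d).mulVec v = 0 ∧
            y = Real.cos t • x + Real.sin t • d) := by
  intro y
  have hεpm : ∀ i, ε i = 1 ∨ ε i = -1 := by
    intro i; rw [hεdef]; split
    · right; rfl
    · left; rfl
  set S1 := Finset.univ.filter (fun i : Fin (p + q + 2) => i.val < p + 1) with hS1
  set S2 := Finset.univ.filter (fun i : Fin (p + q + 2) => ¬ i.val < p + 1) with hS2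
  have hip : ∀ a b : Fin (p + q + 2) → ℝ, ipR ε a b
      = -(∑ i ∈ S1, a i * b i) + ∑ i ∈ S2, a i * b i := by
    intro a b
    unfold ipR
    rw [← Finset.sum_filter_add_sum_filter_not Finset.univ
      (fun i : Fin (p + q + 2) => i.val < p + 1), ← hS1, ← hS2]
    congr 1
    · rw [← Finset.sum_neg_distrib]
      refine Finset.sum_congr rfl fun i hi => ?_
      rw [hS1] at hi
      rw [hεdef i, if_pos (Finset.mem_filter.mp hi).2]; ring
    · refine Finset.sum_congr rfl fun i hi => ?_
      rw [hS2] at hi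
      rw [hεdef i, if_neg (Finset.mem_filter.mp hi).2]; ring
  constructor
  · rintro ⟨hy1, hy2, hyv⟩
    have hipxy : ipR ε x y = 0 := ip_eq_zero ε hεpm v hv x y hxv hyv
    obtain ⟨c, hc⟩ : ∃ c : ℝ, c = ∑ i ∈ S2, x i * y i := ⟨_, rfl⟩
    have hc1 : ∑ i ∈ S1, x i * y i = c := by
      have h := hip x y
      rw [hipxy] at h
      linarith
    have expand1 : ∀ s : Finset (Fin (p + q + 2)), ∑ i ∈ s, (y i - c * x i) * x i
        = (∑ i ∈ s, x i * y i) - c * ∑ i ∈ s, x i ^ 2 := by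
      intro s
      rw [Finset.mul_sum, ← Finset.sum_sub_distrib]
      exact Finset.sum_congr rfl fun i _ => by ring
    have expand2 : ∀ s : Finset (Fin (p + q + 2)), ∑ i ∈ s, (y i - c * x i) ^ 2
        = (∑ i ∈ s, y i ^ 2) - 2 * c * (∑ i ∈ s, x i * y i)
          + c ^ 2 * ∑ i ∈ s, x i ^ 2 := by
      intro s
      rw [Finset.mul_sum, Finset.mul_sum, ← Finset.sum_sub_distrib, ← Finset.sum_add_distrib]
      exact Finset.sum_congr rfl fun i _ => by ring
    have hw1p : ∑ i ∈ S1, (y i - c * x i) * x i = 0 := by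
      rw [expand1, hc1, hx1]; ring
    have hw2p : ∑ i ∈ S2, (y i - c * x i) * x i = 0 := by
      rw [expand1, ← hc, hx2]; ring
    have hw1n : ∑ i ∈ S1, (y i - c * x i) ^ 2 = 1 - c ^ 2 := by
      rw [expand2, hy1, hc1, hx1]; ring
    have hw2n : ∑ i ∈ S2, (y i - c * x i) ^ 2 = 1 - c ^ 2 := by
      rw [expand2, hy2, ← hc, hx2]; ring
    have h0 : (0 : ℝ) ≤ 1 - c ^ 2 := hw1n ▸ Finset.sum_nonneg fun i _ => sq_nonneg _
    by_cases hone : c ^ 2 = 1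
    · have hzero : ∀ i : Fin (p + q + 2), y i - c * x i = 0 := by
        intro i
        by_cases hi : i.val < p + 1
        · have hsum : ∑ i ∈ S1, (y i - c * x i) ^ 2 = 0 := by rw [hw1n, hone]; ring
          have hmem : i ∈ S1 := by rw [hS1]; exact Finset.mem_filter.mpr ⟨Finset.mem_univ i, hi⟩
          have := (Finset.sum_eq_zero_iff_of_nonneg fun j _ => sq_nonneg _).mp hsum i hmem
          exact (pow_eq_zero_iff (by norm_num)).mp this
        · have hsum : ∑ i ∈ S2, (y i - c * x i) ^ 2 = 0 := by rw [hw2n, hone]; ring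
          have hmem : i ∈ S2 := by rw [hS2]; exact Finset.mem_filter.mpr ⟨Finset.mem_univ i, hi⟩
          have := (Finset.sum_eq_zero_iff_of_nonneg fun j _ => sq_nonneg _).mp hsum i hmem
          exact (pow_eq_zero_iff (by norm_num)).mp this
      have hyx : y = c • x := by
        funext i
        have := hzero i
        simp only [Pi.smul_apply, smul_eq_mul]
        linarith
      have hfac : (c - 1) * (c + 1) = 0 := by nlinarith
      rcases mul_eq_zero.mp hfac with h | h
      · left
        have hc1' : c = 1 := by linarith
        rw [hyx, hc1', one_smul]
      · right; left
        have hc1' : c = -1 := by linarith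
        rw [hyx, hc1']
        exact neg_one_smul ℝ x
    · have hlt : c ^ 2 < 1 := lt_of_le_of_ne (by linarith) hone
      set s := Real.sqrt (1 - c ^ 2) with hs
      have hs0 : 0 < s := Real.sqrt_pos.mpr (by linarith)
      have hsne : s ≠ 0 := ne_of_gt hs0
      have hs2 : s ^ 2 = 1 - c ^ 2 := Real.sq_sqrt (by linarith)
      right; right
      refine ⟨Real.arccos c, fun i => s⁻¹ * (y i - c * x i), ?_, ?_, ?_, ?_, ?_, ?_⟩
      · have h : ∑ i ∈ S1, s⁻¹ * (y i - c * x i) * x i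
            = s⁻¹ * ∑ i ∈ S1, (y i - c * x i) * x i := by
          rw [Finset.mul_sum]; exact Finset.sum_congr rfl fun i _ => by ring
        rw [h, hw1p, mul_zero]
      · have h : ∑ i ∈ S2, s⁻¹ * (y i - c * x i) * x i
            = s⁻¹ * ∑ i ∈ S2, (y i - c * x i) * x i := by
          rw [Finset.mul_sum]; exact Finset.sum_congr rfl fun i _ => by ring
        rw [h, hw2p, mul_zero]
      · have h : ∑ i ∈ S1, (s⁻¹ * (y i - c * x i)) ^ 2
            = s⁻¹ ^ 2 * ∑ i ∈ S1, (y i - c * x i) ^ 2 := by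
          rw [Finset.mul_sum]; exact Finset.sum_congr rfl fun i _ => by ring
        rw [h, hw1n, ← hs2]
        field_simp
      · have h : ∑ i ∈ S2, (s⁻¹ * (y i - c * x i)) ^ 2
            = s⁻¹ ^ 2 * ∑ i ∈ S2, (y i - c * x i) ^ 2 := by
          rw [Finset.mul_sum]; exact Finset.sum_congr rfl fun i _ => by ring
        rw [h, hw2n, ← hs2]
        field_simp
      · have hfun : (fun i => s⁻¹ * (y i - c * x i))
            = fun i => (-(s⁻¹ * c)) * x i + s⁻¹ * y i := by
          funext i; ring
        rw [hfun, cliffR_combo, Matrix.add_mulVec, Matrix.smul_mulVec,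
          Matrix.smul_mulVec, hxv, hyv, smul_zero, smul_zero, add_zero]
      · have hcb1 : -1 ≤ c := by nlinarith
        have hcb2 : c ≤ 1 := by nlinarith
        have hcos : Real.cos (Real.arccos c) = c := Real.cos_arccos hcb1 hcb2
        have hsin : Real.sin (Real.arccos c) = s := by rw [Real.sin_arccos, hs]
        funext i
        simp only [Pi.add_apply, Pi.smul_apply, smul_eq_mul, hcos, hsin]
        field_simp
        ring
  · rintro (rfl | rfl | ⟨t, d, hdx1, hdx2, hd1, hd2, hdv, rfl⟩)
    · exact ⟨hx1, hx2, hxv⟩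
    · refine ⟨?_, ?_, ?_⟩
      · simpa [neg_sq] using hx1
      · simpa [neg_sq] using hx2
      · have hfun : (-x) = fun i => (-1 : ℝ) * x i + 0 * x i := by
          funext i; show -x i = -1 * x i + 0 * x i; ring
        rw [hfun, cliffR_combo, Matrix.add_mulVec, Matrix.smul_mulVec,
          Matrix.smul_mulVec, hxv]
        simp
    · have hfun : (Real.cos t • x + Real.sin t • d)
          = fun i => Real.cos t * x i + Real.sin t * d i := by
        funext i; simp
      have hpy : Real.sin t ^ 2 + Real.cos t ^ 2 = 1 := Real.sin_sq_add_cos_sq t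
      refine ⟨?_, ?_, ?_⟩
      · rw [hfun]
        rw [sum_sq_expand S1 (Real.cos t) (Real.sin t) x d, hx1, hd1, hdx1]
        ring_nf
        linarith
      · rw [hfun]
        rw [sum_sq_expand S2 (Real.cos t) (Real.sin t) x d, hx2, hd2, hdx2]
        ring_nf
        linarith
      · rw [hfun, cliffR_combo, Matrix.add_mulVec, Matrix.smul_mulVec,
          Matrix.smul_mulVec, hxv, hdv, smul_zero, smul_zero, add_zero]

end Paper
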